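/- For every tree T ∈ Tour(k_1,...,k_n) and every label r that is a winner of the lazy tournament of T, the label r loses at most one round of the tournament; in fact r never loses any round (winners and losers are disjoint: each label in {c,1,...,n} is either a winner of every round it plays or a loser of every round it plays). -/

import Mathlib

open SimpleGraph

/-- A candidate leaf-labeled graph on vertex set `Fin V` with `L` labeled leaves. -/
structure PreTree (L V : ℕ) where
  adj : Fin V → Fin V → Bool
  symm' : ∀ u v, adj u v = adj v u
  loopless' : ∀ v, adj v v = false
  leaf : Fin L → Fin V

def PreTree.G {L V : ℕ} (T : PreTree L V) : SimpleGraph (Fin V) where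
  Adj u v := T.adj u v = true
  symm := ⟨fun u v h => by show T.adj v u = true; rw [T.symm']; exact h⟩
  loopless := ⟨fun v h => by change T.adj v v = true at h; rw [T.loopless' v] at h; exact Bool.noConfusion h⟩

instance {L V : ℕ} (T : PreTree L V) : DecidableRel T.G.Adj :=
  fun u v => inferInstanceAs (Decidable (T.adj u v = true))

/-- `T` is a trivalent tree with leaves labeled bijectively by `Fin L`. -/
def PreTree.IsTrivalent {L V : ℕ} (T : PreTree L V) : Prop :=
  T.G.IsTree ∧ (∀ v, T.G.degree v = 1 ∨ T.G.degree v = 3) ∧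
    Function.Injective T.leaf ∧ (∀ i, T.G.degree (T.leaf i) = 1) ∧
    (∀ v, T.G.degree v = 1 → ∃ i, T.leaf i = v)

/-- Label-preserving isomorphism of leaf-labeled graphs. -/
def PreTree.Iso {L V : ℕ} (T T' : PreTree L V) : Prop :=
  ∃ σ : Fin V ≃ Fin V, (∀ u v, T'.adj (σ u) (σ v) = T.adj u v) ∧ ∀ i, σ (T.leaf i) = T'.leaf i

/-- Leaves `a = 0` and `b = 1` share a common (internal) vertex. -/
def PreTree.ABAdj {n V : ℕ} (T : PreTree (n+3) V) : Prop :=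
  ∃ v, T.G.Adj (T.leaf 0) v ∧ T.G.Adj (T.leaf 1) v

/-- Number of isomorphism classes of leaf-labeled graphs satisfying `P`. -/
noncomputable def classCount {L V : ℕ} (P : PreTree L V → Prop) : ℕ :=
  Nat.card (Quot fun (T T' : {T : PreTree L V // P T}) => PreTree.Iso T.1 T'.1)

/-- `w` separates `x` from `y` in `G`: every walk from `x` to `y` passes through `w`. -/
def Separates {V : Type*} (G : SimpleGraph V) (w x y : V) : Prop :=
  ∀ p : G.Walk x y, w ∈ p.support

/-- The laziness rule applies: the unlabeled edge `E` is adjacent to a labeled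
edge carrying a label `u ≠ j` with `u > i`. -/
def LazyApplies {n : ℕ} (T : PreTree (n+3) (2*n+4))
    (lab : Sym2 (Fin (2*n+4)) → Option (Fin (n+3)))
    (E : Sym2 (Fin (2*n+4))) (i j : Fin (n+3)) : Prop :=
  ∃ (e : Sym2 (Fin (2*n+4))) (u : Fin (n+3)) (v : Fin (2*n+4)),
    e ∈ T.G.edgeSet ∧ v ∈ e ∧ v ∈ E ∧ e ≠ E ∧ lab e = some u ∧ u ≠ j ∧ i < u

/-- A run of the lazy tournament on a tree with `n+3` leaves (labels ordered
`a = 0 < b = 1 < c = 2 < 1 = 3 < ⋯ < n = n+2` as elements of `Fin (n+3)`).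
`lab t` is the edge labeling before round `t`; round `t` has `loser t < winner t`
on adjacent labeled edges `loserE t`, `winnerE t` sharing vertex `vtx t` with the
unlabeled edge `newE t`, the pair having the maximal smaller label, and `newE t`
gets labeled according to the laziness rule. -/
structure Run (n : ℕ) (T : PreTree (n+3) (2*n+4)) where
  lab : ℕ → Sym2 (Fin (2*n+4)) → Option (Fin (n+3))
  loser : Fin n → Fin (n+3)
  winner : Fin n → Fin (n+3)
  loserE : Fin n → Sym2 (Fin (2*n+4))
  winnerE : Fin n → Sym2 (Fin (2*n+4))
  newE : Fin n → Sym2 (Fin (2*n+4))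
  vtx : Fin n → Fin (2*n+4)
  init_leaf : ∀ (i : Fin (n+3)) (w : Fin (2*n+4)), T.G.Adj (T.leaf i) w →
    lab 0 s(T.leaf i, w) = some i
  init_other : ∀ e : Sym2 (Fin (2*n+4)), (∀ i : Fin (n+3), T.leaf i ∉ e) → lab 0 e = none
  init_nonedge : ∀ e, e ∉ T.G.edgeSet → lab 0 e = none
  lt_lw : ∀ t, loser t < winner t
  loserE_mem : ∀ t, loserE t ∈ T.G.edgeSet
  winnerE_mem : ∀ t, winnerE t ∈ T.G.edgeSet
  newE_mem : ∀ t, newE t ∈ T.G.edgeSet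
  lab_loserE : ∀ t, lab t.1 (loserE t) = some (loser t)
  lab_winnerE : ∀ t, lab t.1 (winnerE t) = some (winner t)
  vtx_mem : ∀ t, vtx t ∈ loserE t ∧ vtx t ∈ winnerE t ∧ vtx t ∈ newE t
  edges_distinct : ∀ t, loserE t ≠ winnerE t ∧ loserE t ≠ newE t ∧ winnerE t ≠ newE t
  newE_unlabeled : ∀ t, lab t.1 (newE t) = none
  max_rule : ∀ (t : Fin n) (e1 e2 e3 : Sym2 (Fin (2*n+4))) (i j : Fin (n+3)) (v : Fin (2*n+4)),
    e1 ∈ T.G.edgeSet → e2 ∈ T.G.edgeSet → e3 ∈ T.G.edgeSet →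
    lab t.1 e1 = some i → lab t.1 e2 = some j → lab t.1 e3 = none → i < j →
    v ∈ e1 → v ∈ e2 → v ∈ e3 → e1 ≠ e2 → e1 ≠ e3 → e2 ≠ e3 →
    i ≤ loser t
  step_lazy : ∀ t : Fin n, LazyApplies T (lab t.1) (newE t) (loser t) (winner t) →
    lab (t.1+1) (newE t) = some (loser t)
  step_nonlazy : ∀ t : Fin n, ¬ LazyApplies T (lab t.1) (newE t) (loser t) (winner t) →
    lab (t.1+1) (newE t) = some (winner t)
  step_frame : ∀ (t : Fin n) (e : Sym2 (Fin (2*n+4))), e ≠ newE t → lab (t.1+1) e = lab t.1 e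

/-- Number of rounds won by label `i`. -/
def Run.wins {n : ℕ} {T : PreTree (n+3) (2*n+4)} (R : Run n T) (i : Fin (n+3)) : ℕ :=
  (Finset.univ.filter fun t : Fin n => R.winner t = i).card

/-- The element of `Fin (n+3)` corresponding to the numeric label `m+1 ∈ {1,…,n}`. -/
def lbl {n : ℕ} (m : Fin n) : Fin (n+3) := ⟨(m:ℕ)+3, by omega⟩

/-- `T ∈ Tour(k₁,…,kₙ)`. -/
def InTour {n : ℕ} (k : Fin n → ℕ) (T : PreTree (n+3) (2*n+4)) : Prop :=
  T.IsTrivalent ∧ T.ABAdj ∧ ∃ R : Run n T, ∀ m : Fin n, R.wins (lbl m) = k m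

/-- `|Tour(k₁,…,kₙ)|` (isomorphism classes). -/
noncomputable def TourCount {n : ℕ} (k : Fin n → ℕ) : ℕ := classCount (InTour k)

/-- `T'` is obtained from `T` by deleting the largest leaf and suppressing
the resulting degree-2 vertex `w`. -/
def DelLast (n : ℕ) (T : PreTree ((n+1)+3) (2*(n+1)+4)) (T' : PreTree (n+3) (2*n+4)) : Prop :=
  ∃ (g : Fin (2*n+4) → Fin (2*(n+1)+4)) (w : Fin (2*(n+1)+4)),
    Function.Injective g ∧
    T.G.Adj (T.leaf (Fin.last (n+3))) w ∧
    (∀ v, v ∈ Set.range g ↔ (v ≠ T.leaf (Fin.last (n+3)) ∧ v ≠ w)) ∧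
    (∀ u u' : Fin (2*n+4), T'.G.Adj u u' ↔
      (T.G.Adj (g u) (g u') ∨ (T.G.Adj (g u) w ∧ T.G.Adj (g u') w ∧ g u ≠ g u'))) ∧
    (∀ i : Fin (n+3), g (T'.leaf i) = T.leaf (Fin.castSucc i))

/-- `T'` is obtained from `T` by successively deleting the leaves `r+1, …, n`. -/
inductive Restricts : (n : ℕ) → (r : ℕ) → PreTree (n+3) (2*n+4) → PreTree (r+3) (2*r+4) → Prop
  | refl (n : ℕ) (T : PreTree (n+3) (2*n+4)) : Restricts n n T T
  | step (n r : ℕ) (T : PreTree ((n+1)+3) (2*(n+1)+4)) (T1 : PreTree (n+3) (2*n+4))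
      (T2 : PreTree (r+3) (2*r+4)) :
      DelLast n T T1 → Restricts n r T1 T2 → Restricts (n+1) r T T2

/-- The composition `k̃_j`: decrement `k j` and delete position `dpos`
(the rightmost zero of the result). -/
def tilde {n : ℕ} (k : Fin (n+1) → ℕ) (dpos : ℕ) (j : Fin (n+1)) : Fin n → ℕ :=
  fun m => if (m:ℕ) < dpos then Function.update k j (k j - 1) (Fin.castSucc m)
           else Function.update k j (k j - 1) (Fin.succ m)

/-- The map `π_lazy` relates `T` to the pair `(j, T')` where `j` is the winner of the
first round of the tournament, the two leaves that competed are deleted (the shared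
vertex becoming a new leaf) and the labels are shifted according to the (non)lazy case. -/
def PiLazyRel (n : ℕ) (k : Fin (n+1) → ℕ) (T : PreTree ((n+1)+3) (2*(n+1)+4))
    (j : Fin (n+1)) (T' : PreTree (n+3) (2*n+4)) : Prop :=
  ∃ (R : Run (n+1) T) (g : Fin (2*n+4) → Fin (2*(n+1)+4)),
    (∀ m : Fin (n+1), R.wins (lbl m) = k m) ∧
    R.winner ⟨0, Nat.succ_pos n⟩ = lbl j ∧
    Function.Injective g ∧
    (∀ v, v ∈ Set.range g ↔
      (v ≠ T.leaf (R.loser ⟨0, Nat.succ_pos n⟩) ∧ v ≠ T.leaf (R.winner ⟨0, Nat.succ_pos n⟩))) ∧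
    (∀ u u' : Fin (2*n+4), T'.G.Adj u u' ↔ T.G.Adj (g u) (g u')) ∧
    (if k j = 1 then
      ∀ β : Fin (n+3), g (T'.leaf β) =
        (if (β:ℕ) = ((R.loser ⟨0, Nat.succ_pos n⟩) : ℕ) then R.vtx ⟨0, Nat.succ_pos n⟩
         else if (β:ℕ) < ((R.winner ⟨0, Nat.succ_pos n⟩) : ℕ) then T.leaf (Fin.castSucc β)
         else T.leaf (Fin.succ β))
     else
      ∀ β : Fin (n+3), g (T'.leaf β) =
        (if (β:ℕ) < ((R.loser ⟨0, Nat.succ_pos n⟩) : ℕ) then T.leaf (Fin.castSucc β)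
         else if (β:ℕ)+1 = ((R.winner ⟨0, Nat.succ_pos n⟩) : ℕ) then R.vtx ⟨0, Nat.succ_pos n⟩
         else T.leaf (Fin.succ β)))

/-! ### Parking functions.
A parking function of size `n` is encoded by `col : Fin n → Fin n`, where `col x` is the
(0-indexed) column of the label `x+1`; the Dyck path condition (for paths from `(0,n)` to
`(n,0)` staying weakly above the diagonal, cells left of down steps) is `IsPF`. -/

def IsPF {n : ℕ} (col : Fin n → Fin n) : Prop :=
  ∀ j : Fin n, n - (j:ℕ) ≤ (Finset.univ.filter fun x => j ≤ col x).card

/-- Dominance index of label `x+1`: the number of columns strictly to its right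
containing no entry greater than `x+1` (empty columns count). -/
def domIdx {n : ℕ} (col : Fin n → Fin n) (x : Fin n) : ℕ :=
  (Finset.univ.filter fun j : Fin n => col x < j ∧ ∀ y, col y = j → y ≤ x).card

/-- Column-restricted: `x > d_x` for all labels `x` (label `x : Fin n` has value `x+1`). -/
def ColRes {n : ℕ} (col : Fin n → Fin n) : Prop := ∀ x : Fin n, domIdx col x < (x:ℕ) + 1

/-- Number of labels in column `j`. -/
def colCount {n : ℕ} (col : Fin n → Fin n) (j : Fin n) : ℕ :=
  (Finset.univ.filter fun x => col x = j).card

/-- `col'` is the image of `col` under the map `r`: remove the row containing the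
label `1`, decrement the remaining labels, and delete the rightmost empty column `E`. -/
def RSpec {n : ℕ} (col : Fin (n+1) → Fin (n+1)) (col' : Fin n → Fin n) : Prop :=
  ∃ E : Fin (n+1),
    (∀ y : Fin (n+1), y ≠ 0 → col y ≠ E) ∧
    (∀ j : Fin (n+1), (∀ y, y ≠ 0 → col y ≠ j) → j ≤ E) ∧
    (∀ x : Fin n, (col' x : ℕ) =
      if (col (Fin.succ x) : ℕ) < (E:ℕ) then (col (Fin.succ x) : ℕ)
      else (col (Fin.succ x) : ℕ) - 1)

/-- `col` is the parking function `τ(T)`: column `col m` contains label `m+1`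
iff the label `col m + 1` wins round `m+1` of the lazy tournament of `T`. -/
def TauRel {n : ℕ} (T : PreTree (n+3) (2*n+4)) (col : Fin n → Fin n) : Prop :=
  ∃ R : Run n T, ∀ t : Fin n, ((R.winner t) : ℕ) = (col t : ℕ) + 3

/-! ### Auxiliary lemmas for the lazy tournament -/

section LazyAux

variable {n : ℕ} {T : PreTree (n+3) (2*n+4)}

/-- Labels persist through one round. -/
lemma Run.persist_step (R : Run n T) (t : Fin n) (e : Sym2 (Fin (2*n+4))) (x : Fin (n+3))
    (h : R.lab t.1 e = some x) : R.lab (t.1+1) e = some x := by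
  by_cases he : e = R.newE t
  · rw [he, R.newE_unlabeled t] at h; exact nomatch h
  · rw [R.step_frame t e he]; exact h

/-- Labels persist. -/
lemma Run.persist (R : Run n T) (e : Sym2 (Fin (2*n+4))) (x : Fin (n+3)) :
    ∀ b, b ≤ n → ∀ a, a ≤ b → R.lab a e = some x → R.lab b e = some x := by
  intro b
  induction b with
  | zero =>
    intro _ a ha h
    obtain rfl : a = 0 := Nat.le_zero.mp ha
    exact h
  | succ m ih =>
    intro hb a ha h
    rcases Nat.eq_or_lt_of_le ha with rfl | hlt
    · exact h
    · exact R.persist_step ⟨m, by omega⟩ e x (ih (by omega) a (by omega) h)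

lemma Run.unlabeled_back (R : Run n T) (e : Sym2 (Fin (2*n+4))) :
    ∀ b, b ≤ n → ∀ a, a ≤ b → R.lab b e = none → R.lab a e = none := by
  intro b hb a ha h
  cases hx : R.lab a e with
  | none => rfl
  | some x => rw [R.persist e x b hb a ha hx] at h; exact nomatch h

/-- Unlabeled edges are not incident to leaves. -/
lemma Run.no_leaf_of_unlabeled (R : Run n T) (e : Sym2 (Fin (2*n+4)))
    (he : e ∈ T.G.edgeSet) (s : ℕ) (hs : s ≤ n) (h : R.lab s e = none)
    (i : Fin (n+3)) : T.leaf i ∉ e := by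
  intro hmem
  have h0 : R.lab 0 e = none := R.unlabeled_back e s hs 0 (Nat.zero_le _) h
  have hadj : T.G.Adj (T.leaf i) (Sym2.Mem.other hmem) := by
    rw [← SimpleGraph.mem_edgeSet, Sym2.other_spec hmem]
    exact he
  have hinit := R.init_leaf i _ hadj
  rw [Sym2.other_spec hmem, h0] at hinit
  exact nomatch hinit

/-- Endpoints of unlabeled edges have degree 3. -/
lemma Run.deg_three_of_unlabeled (hT : T.IsTrivalent) (R : Run n T)
    (e : Sym2 (Fin (2*n+4))) (he : e ∈ T.G.edgeSet) (s : ℕ) (hs : s ≤ n)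
    (h : R.lab s e = none) (v : Fin (2*n+4)) (hv : v ∈ e) : T.G.degree v = 3 := by
  rcases hT.2.1 v with h1 | h3
  · obtain ⟨i, hi⟩ := hT.2.2.2.2 v h1
    exact absurd (by rw [hi]; exact hv) (R.no_leaf_of_unlabeled e he s hs h i)
  · exact h3

/-- At a degree-3 vertex, three given distinct incident edges are all the incident edges. -/
lemma edges_at_deg3 (v : Fin (2*n+4)) (hd : T.G.degree v = 3)
    (e1 e2 e3 : Sym2 (Fin (2*n+4)))
    (h1 : e1 ∈ T.G.edgeSet) (h2 : e2 ∈ T.G.edgeSet) (h3 : e3 ∈ T.G.edgeSet)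
    (hv1 : v ∈ e1) (hv2 : v ∈ e2) (hv3 : v ∈ e3)
    (h12 : e1 ≠ e2) (h13 : e1 ≠ e3) (h23 : e2 ≠ e3)
    (e : Sym2 (Fin (2*n+4))) (he : e ∈ T.G.edgeSet) (hve : v ∈ e) :
    e = e1 ∨ e = e2 ∨ e = e3 := by
  classical
  have hmem : ∀ f, f ∈ T.G.edgeSet → v ∈ f → f ∈ T.G.incidenceFinset v := by
    intro f hf hvf
    rw [SimpleGraph.mem_incidenceFinset]
    exact ⟨hf, hvf⟩
  have hsub : ({e1, e2, e3} : Finset (Sym2 (Fin (2*n+4)))) ⊆ T.G.incidenceFinset v := by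
    intro f hf
    simp only [Finset.mem_insert, Finset.mem_singleton] at hf
    rcases hf with rfl | rfl | rfl
    · exact hmem _ h1 hv1
    · exact hmem _ h2 hv2
    · exact hmem _ h3 hv3
  have hcard : ({e1, e2, e3} : Finset (Sym2 (Fin (2*n+4)))).card = 3 := by
    rw [Finset.card_insert_of_notMem (by simp [h12, h13]),
      Finset.card_insert_of_notMem (by simp [h23]), Finset.card_singleton]
  have heq := Finset.eq_of_subset_of_card_le hsub
    (by rw [SimpleGraph.card_incidenceFinset_eq_degree, hd, hcard])
  have : e ∈ ({e1, e2, e3} : Finset (Sym2 (Fin (2*n+4)))) := by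
    rw [heq]; exact hmem e he hve
  simpa using this

lemma Run.vtx_deg3 (hT : T.IsTrivalent) (R : Run n T) (t : Fin n) :
    T.G.degree (R.vtx t) = 3 :=
  R.deg_three_of_unlabeled hT _ (R.newE_mem t) t.1 (Nat.le_of_lt t.isLt)
    (R.newE_unlabeled t) _ (R.vtx_mem t).2.2

lemma Run.edges_at_vtx (hT : T.IsTrivalent) (R : Run n T) (t : Fin n)
    (e : Sym2 (Fin (2*n+4))) (he : e ∈ T.G.edgeSet) (hv : R.vtx t ∈ e) :
    e = R.loserE t ∨ e = R.winnerE t ∨ e = R.newE t :=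
  edges_at_deg3 _ (R.vtx_deg3 hT t) _ _ _ (R.loserE_mem t) (R.winnerE_mem t) (R.newE_mem t)
    (R.vtx_mem t).1 (R.vtx_mem t).2.1 (R.vtx_mem t).2.2
    (R.edges_distinct t).1 (R.edges_distinct t).2.1 (R.edges_distinct t).2.2 e he hv

lemma Run.newE_labeled_succ (R : Run n T) (t : Fin n) :
    R.lab (t.1+1) (R.newE t) = some (R.loser t) ∨
      R.lab (t.1+1) (R.newE t) = some (R.winner t) := by
  by_cases h : LazyApplies T (R.lab t.1) (R.newE t) (R.loser t) (R.winner t)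
  · exact Or.inl (R.step_lazy t h)
  · exact Or.inr (R.step_nonlazy t h)

/-- After round `t`, all edges at `vtx t` are labeled. -/
lemma Run.vtx_all_labeled (hT : T.IsTrivalent) (R : Run n T) (t : Fin n)
    (f : Sym2 (Fin (2*n+4))) (hf : f ∈ T.G.edgeSet) (hvf : R.vtx t ∈ f) :
    R.lab (t.1+1) f ≠ none := by
  rcases R.edges_at_vtx hT t f hf hvf with rfl | rfl | rfl
  · rw [R.step_frame t _ (R.edges_distinct t).2.1, R.lab_loserE t]; simp
  · rw [R.step_frame t _ (fun hc => (R.edges_distinct t).2.2 hc), R.lab_winnerE t]; simp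
  · rcases R.newE_labeled_succ t with h | h <;> rw [h] <;> simp

/-- Where a label can come from. -/
lemma Run.labeled_source (R : Run n T) :
    ∀ s : ℕ, s ≤ n → ∀ e (r : Fin (n+3)), R.lab s e = some r →
      (∃ w, T.G.Adj (T.leaf r) w ∧ e = s(T.leaf r, w)) ∨
      (∃ t : Fin n, t.1 < s ∧ R.newE t = e ∧ (R.loser t = r ∨ R.winner t = r)) := by
  intro s
  induction s with
  | zero =>
    intro _ e r h
    left
    by_cases he : e ∈ T.G.edgeSet
    · by_cases hl : ∃ i, T.leaf i ∈ e
      · obtain ⟨i, hi⟩ := hl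
        have hadj : T.G.Adj (T.leaf i) (Sym2.Mem.other hi) := by
          rw [← SimpleGraph.mem_edgeSet, Sym2.other_spec hi]
          exact he
        have hinit := R.init_leaf i _ hadj
        rw [Sym2.other_spec hi, h] at hinit
        obtain rfl : i = r := (Option.some.inj hinit).symm
        exact ⟨_, hadj, (Sym2.other_spec hi).symm⟩
      · push_neg at hl
        rw [R.init_other e hl] at h
        exact nomatch h
    · rw [R.init_nonedge e he] at h
      exact nomatch h
  | succ m ih =>
    intro hm e r h
    have hmn : m < n := hm
    by_cases he : e = R.newE ⟨m, hmn⟩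
    · right
      refine ⟨⟨m, hmn⟩, Nat.lt_succ_self m, he.symm, ?_⟩
      have h' : R.lab (m+1) e = some r := h
      rw [he] at h'
      rcases R.newE_labeled_succ ⟨m, hmn⟩ with hl | hl
      · exact Or.inl (Option.some.inj ((hl : R.lab (m+1) (R.newE ⟨m, hmn⟩) = _).symm.trans h'))
      · exact Or.inr (Option.some.inj ((hl : R.lab (m+1) (R.newE ⟨m, hmn⟩) = _).symm.trans h'))
    · have h' : R.lab m e = some r :=
        ((R.step_frame ⟨m, hmn⟩ e he : R.lab (m+1) e = R.lab m e)).symm.trans h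
      rcases ih (by omega) e r h' with hleft | ⟨t, ht, rest⟩
      · exact Or.inl hleft
      · exact Or.inr ⟨t, by omega, rest⟩

end LazyAux

section LazyMain

variable {n : ℕ} {T : PreTree (n+3) (2*n+4)}

/-- If the lazy rule fires and the loser is `r`, then at each endpoint of the new edge
that still has an unlabeled incident edge, there is an incident edge with a label above `r`. -/
lemma Run.lazy_good (hT : T.IsTrivalent) (R : Run n T) (t : Fin n) (r : Fin (n+3))
    (hr : R.loser t = r)
    (hlz : LazyApplies T (R.lab t.1) (R.newE t) (R.loser t) (R.winner t))
    (v : Fin (2*n+4)) (hv : v ∈ R.newE t)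
    (f : Sym2 (Fin (2*n+4))) (hfe : f ∈ T.G.edgeSet) (hvf : v ∈ f)
    (hfn : R.lab (t.1+1) f = none) :
    ∃ e u, e ∈ T.G.edgeSet ∧ v ∈ e ∧ R.lab (t.1+1) e = some u ∧ r < u := by
  by_cases hvv : v = R.vtx t
  · exact absurd hfn (R.vtx_all_labeled hT t f hfe (by rw [← hvv]; exact hvf))
  · obtain ⟨e, u, v₀, hem, hv₀e, hv₀E, hne, hlab, hunej, hltu⟩ := hlz
    have ho : R.vtx t = Sym2.Mem.other hv := by
      have h2 : R.vtx t ∈ s(v, Sym2.Mem.other hv) := by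
        rw [Sym2.other_spec hv]; exact (R.vtx_mem t).2.2
      rcases Sym2.mem_iff.mp h2 with hc | hc
      · exact absurd hc.symm hvv
      · exact hc
    have hv₀ : v₀ = v := by
      have h1 : v₀ ∈ s(v, Sym2.Mem.other hv) := by rw [Sym2.other_spec hv]; exact hv₀E
      rcases Sym2.mem_iff.mp h1 with hc | hc
      · exact hc
      · exfalso
        have hvte : R.vtx t ∈ e := by rw [ho, ← hc]; exact hv₀e
        rcases R.edges_at_vtx hT t e hem hvte with rfl | rfl | rfl
        · rw [R.lab_loserE t] at hlab
          have : R.loser t = u := Option.some.inj hlab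
          exact absurd hltu (by rw [this]; exact lt_irrefl _)
        · rw [R.lab_winnerE t] at hlab
          exact hunej (Option.some.inj hlab).symm
        · exact hne rfl
    subst hv₀
    refine ⟨e, u, hem, hv₀e, ?_, ?_⟩
    · rw [R.step_frame t e hne]; exact hlab
    · rw [← hr]; exact hltu

/-- Handles a newly labeled edge in the invariant propagation. -/
lemma Run.newE_good (hT : T.IsTrivalent) (R : Run n T) (t : Fin n) (r : Fin (n+3))
    (hnw : R.winner t ≠ r)
    (hX : R.lab (t.1+1) (R.newE t) = some r)
    (v : Fin (2*n+4)) (hv : v ∈ R.newE t)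
    (f : Sym2 (Fin (2*n+4))) (hfe : f ∈ T.G.edgeSet) (hvf : v ∈ f)
    (hfn : R.lab (t.1+1) f = none) :
    ∃ e u, e ∈ T.G.edgeSet ∧ v ∈ e ∧ R.lab (t.1+1) e = some u ∧ r < u := by
  by_cases hlz : LazyApplies T (R.lab t.1) (R.newE t) (R.loser t) (R.winner t)
  · have h1 := R.step_lazy t hlz
    have hr : R.loser t = r := Option.some.inj (h1.symm.trans hX)
    exact R.lazy_good hT t r hr hlz v hv f hfe hvf hfn
  · have h1 := R.step_nonlazy t hlz
    exact absurd (Option.some.inj (h1.symm.trans hX)) hnw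

/-- Propagation of the invariant through a round that doesn't touch the `r`-edge. -/
lemma Run.frame_good (R : Run n T) (t : Fin n) (r : Fin (n+3))
    (prev : ∀ X, R.lab t.1 X = some r → ∀ v, v ∈ X →
      ∀ f, f ∈ T.G.edgeSet → v ∈ f → R.lab t.1 f = none →
      ∃ e u, e ∈ T.G.edgeSet ∧ v ∈ e ∧ R.lab t.1 e = some u ∧ r < u)
    (X : Sym2 (Fin (2*n+4))) (hXn : X ≠ R.newE t) (hX : R.lab (t.1+1) X = some r)
    (v : Fin (2*n+4)) (hv : v ∈ X)
    (f : Sym2 (Fin (2*n+4))) (hfe : f ∈ T.G.edgeSet) (hvf : v ∈ f)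
    (hfn : R.lab (t.1+1) f = none) :
    ∃ e u, e ∈ T.G.edgeSet ∧ v ∈ e ∧ R.lab (t.1+1) e = some u ∧ r < u := by
  have hXm : R.lab t.1 X = some r := (R.step_frame t X hXn).symm.trans hX
  have hfne : f ≠ R.newE t := by
    intro hc
    subst hc
    rcases R.newE_labeled_succ t with hh | hh <;> rw [hh] at hfn <;> exact nomatch hfn
  have hfm : R.lab t.1 f = none := (R.step_frame t f hfne).symm.trans hfn
  obtain ⟨e, u, hem, hve, heu, hru⟩ := prev X hXm v hv f hfe hvf hfm
  have hene : e ≠ R.newE t := by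
    intro hc
    rw [hc, R.newE_unlabeled t] at heu
    exact nomatch heu
  exact ⟨e, u, hem, hve, (R.step_frame t e hene).trans heu, hru⟩

/-- Base case of the invariant: right after the first loss of `r`. -/
lemma Run.base_good (hT : T.IsTrivalent) (R : Run n T) (t : Fin n) (r : Fin (n+3))
    (hltm : R.loser t = r)
    (hfirst : ∀ s : Fin n, s.1 < t.1 → R.loser s ≠ r)
    (hnowin : ∀ s : Fin n, s.1 < t.1 → R.winner s ≠ r)
    (X : Sym2 (Fin (2*n+4))) (hXn : X ≠ R.newE t) (hX : R.lab (t.1+1) X = some r)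
    (v : Fin (2*n+4)) (hv : v ∈ X)
    (f : Sym2 (Fin (2*n+4))) (hfe : f ∈ T.G.edgeSet) (hvf : v ∈ f)
    (hfn : R.lab (t.1+1) f = none) :
    ∃ e u, e ∈ T.G.edgeSet ∧ v ∈ e ∧ R.lab (t.1+1) e = some u ∧ r < u := by
  exfalso
  have hn1 : t.1 + 1 ≤ n := t.isLt
  have hXt : R.lab t.1 X = some r := (R.step_frame t X hXn).symm.trans hX
  rcases R.labeled_source t.1 (Nat.le_of_lt t.isLt) X r hXt with ⟨w, hadj, hXeq⟩ |
    ⟨s', hs', hsE, hsw⟩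
  · -- X is the leaf edge of r
    have hlos : R.lab t.1 (R.loserE t) = some r := (R.lab_loserE t).trans (by rw [hltm])
    rcases R.labeled_source t.1 (Nat.le_of_lt t.isLt) _ r hlos with ⟨w', hadj', hLeq⟩ |
      ⟨s', hs', hsE, hsw⟩
    · have hw' : w = w' := by
        have hcard : (T.G.neighborFinset (T.leaf r)).card ≤ 1 := by
          rw [T.G.card_neighborFinset_eq_degree, hT.2.2.2.1 r]
        exact Finset.card_le_one.mp hcard w ((T.G.mem_neighborFinset _ _).mpr hadj)
          w' ((T.G.mem_neighborFinset _ _).mpr hadj')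
      have hXL : X = R.loserE t := by
        rw [hXeq, hw']; exact hLeq.symm
      have hv' : v = T.leaf r ∨ v = w := by rw [hXeq] at hv; exact Sym2.mem_iff.mp hv
      rcases hv' with rfl | rfl
      · exact (R.no_leaf_of_unlabeled f hfe (t.1+1) hn1 hfn r) hvf
      · have hvm : R.vtx t ∈ s(T.leaf r, v) := by
          rw [← hXeq, hXL]; exact (R.vtx_mem t).1
        have hwv : R.vtx t = v := by
          rcases Sym2.mem_iff.mp hvm with hc | hc
          · exact absurd (by rw [← hc]; exact (R.vtx_mem t).2.2)
              (R.no_leaf_of_unlabeled (R.newE t) (R.newE_mem t) t.1 (Nat.le_of_lt t.isLt)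
                (R.newE_unlabeled t) r)
          · exact hc
        exact (R.vtx_all_labeled hT t f hfe (by rw [hwv]; exact hvf)) hfn
    · rcases hsw with hls | hws
      · exact hfirst s' hs' hls
      · exact hnowin s' hs' hws
  · rcases hsw with hls | hws
    · exact hfirst s' hs' hls
    · exact hnowin s' hs' hws

end LazyMain

section LazyFinal

variable {n : ℕ} {T : PreTree (n+3) (2*n+4)}

/-- The loser of a round is weakly decreasing from one round to the next. -/
lemma Run.loser_dec (hT : T.IsTrivalent) (R : Run n T) (t t' : Fin n)
    (h : t'.1 = t.1 + 1) : R.loser t' ≤ R.loser t := by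
  have hL1 : R.lab (t.1+1) (R.loserE t') = some (R.loser t') := by
    rw [← h]; exact R.lab_loserE t'
  have hW1 : R.lab (t.1+1) (R.winnerE t') = some (R.winner t') := by
    rw [← h]; exact R.lab_winnerE t'
  have hN1 : R.lab (t.1+1) (R.newE t') = none := by
    rw [← h]; exact R.newE_unlabeled t'
  have hNne : R.newE t' ≠ R.newE t := by
    intro hc
    rcases R.newE_labeled_succ t with hh | hh <;>
      (rw [hc, hh] at hN1; exact nomatch hN1)
  by_cases hLn : R.loserE t' = R.newE t
  · have hWn : R.winnerE t' ≠ R.newE t := fun hc => (R.edges_distinct t').1 (hLn.trans hc.symm)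
    have hY : R.lab t.1 (R.winnerE t') = some (R.winner t') :=
      (R.step_frame t _ hWn).symm.trans hW1
    have hvE : R.vtx t' ∈ R.newE t := by rw [← hLn]; exact (R.vtx_mem t').1
    by_cases hlz : LazyApplies T (R.lab t.1) (R.newE t) (R.loser t) (R.winner t)
    · have h1 := R.step_lazy t hlz
      have heq : R.loser t' = R.loser t := by
        rw [hLn] at hL1; exact Option.some.inj (hL1.symm.trans h1)
      exact le_of_eq heq
    · have h1 := R.step_nonlazy t hlz
      have heq : R.loser t' = R.winner t := by
        rw [hLn] at hL1; exact Option.some.inj (hL1.symm.trans h1)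
      rcases eq_or_ne (R.winner t') (R.winner t) with hq | hq
      · exact absurd (R.lt_lw t') (by rw [heq, hq]; exact lt_irrefl _)
      · rcases le_or_gt (R.winner t') (R.loser t) with hq2 | hq2
        · exact le_trans (le_of_lt (R.lt_lw t')) hq2
        · exact absurd ⟨R.winnerE t', R.winner t', R.vtx t', R.winnerE_mem t',
            (R.vtx_mem t').2.1, hvE, hWn, hY, hq, hq2⟩ hlz
  · by_cases hWn : R.winnerE t' = R.newE t
    · have hY : R.lab t.1 (R.loserE t') = some (R.loser t') :=
        (R.step_frame t _ hLn).symm.trans hL1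
      have hvE : R.vtx t' ∈ R.newE t := by rw [← hWn]; exact (R.vtx_mem t').2.1
      by_cases hlz : LazyApplies T (R.lab t.1) (R.newE t) (R.loser t) (R.winner t)
      · have h1 := R.step_lazy t hlz
        have heq : R.winner t' = R.loser t := by
          rw [hWn] at hW1; exact Option.some.inj (hW1.symm.trans h1)
        rw [← heq]
        exact le_of_lt (R.lt_lw t')
      · have h1 := R.step_nonlazy t hlz
        have heq : R.winner t' = R.winner t := by
          rw [hWn] at hW1; exact Option.some.inj (hW1.symm.trans h1)
        rcases eq_or_ne (R.loser t') (R.winner t) with hq | hq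
        · exact absurd (R.lt_lw t') (by rw [hq, heq]; exact lt_irrefl _)
        · rcases le_or_gt (R.loser t') (R.loser t) with hq2 | hq2
          · exact hq2
          · exact absurd ⟨R.loserE t', R.loser t', R.vtx t', R.loserE_mem t',
              (R.vtx_mem t').1, hvE, hLn, hY, hq, hq2⟩ hlz
    · have hl : R.lab t.1 (R.loserE t') = some (R.loser t') :=
        (R.step_frame t _ hLn).symm.trans hL1
      have hw : R.lab t.1 (R.winnerE t') = some (R.winner t') :=
        (R.step_frame t _ hWn).symm.trans hW1
      have hn : R.lab t.1 (R.newE t') = none := (R.step_frame t _ hNne).symm.trans hN1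
      exact R.max_rule t _ _ _ _ _ (R.vtx t') (R.loserE_mem t') (R.winnerE_mem t')
        (R.newE_mem t') hl hw hn (R.lt_lw t') (R.vtx_mem t').1 (R.vtx_mem t').2.1
        (R.vtx_mem t').2.2 (R.edges_distinct t').1 (R.edges_distinct t').2.1
        (R.edges_distinct t').2.2

/-- The loser is antitone in the round index. -/
lemma Run.loser_anti (hT : T.IsTrivalent) (R : Run n T) :
    ∀ (bv : ℕ) (hbv : bv < n) (a : Fin n), a.1 ≤ bv → R.loser ⟨bv, hbv⟩ ≤ R.loser a := by
  intro bv
  induction bv with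
  | zero =>
    intro hbv a ha
    have haa : a = ⟨0, hbv⟩ := Fin.ext (Nat.le_zero.mp ha)
    exact le_of_eq (congrArg R.loser haa.symm)
  | succ m ih =>
    intro hbv a ha
    rcases Nat.eq_or_lt_of_le ha with hq | hq
    · have haa : a = ⟨m+1, hbv⟩ := Fin.ext hq
      exact le_of_eq (congrArg R.loser haa.symm)
    · exact le_trans (R.loser_dec hT ⟨m, by omega⟩ ⟨m+1, hbv⟩ rfl) (ih (by omega) a (by omega))

/-- **Winners never lose.** -/
lemma Run.key (hT : T.IsTrivalent) (R : Run n T) :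
    ∀ (m : ℕ) (t1 : Fin n), t1.1 = m → ∀ r : Fin (n+3), R.winner t1 = r →
      ∀ t0 : Fin n, R.loser t0 ≠ r := by
  intro m
  induction m using Nat.strong_induction_on with
  | _ m ih =>
    intro t1 hm r hw t0 hl
    rcases le_or_gt t1.1 t0.1 with hge | hlt0
    · have hmon : R.loser t0 ≤ R.loser t1 := R.loser_anti hT t0.1 t0.isLt t1 hge
      rw [hl] at hmon
      have h2 : R.loser t1 < r := by rw [← hw]; exact R.lt_lw t1
      exact absurd (lt_of_le_of_lt hmon h2) (lt_irrefl r)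
    · have hnowin : ∀ s : Fin n, s.1 < t1.1 → R.winner s ≠ r := by
        intro s hs hws
        exact ih s.1 (by omega) s rfl r hws t0 hl
      classical
      obtain ⟨tmv, htmn, hltm, hminl⟩ :
          ∃ mv : ℕ, ∃ hmv : mv < n, R.loser ⟨mv, hmv⟩ = r ∧
            ∀ s : Fin n, s.1 < mv → R.loser s ≠ r := by
        have hPex : ∃ mv : ℕ, ∃ hmv : mv < n, R.loser ⟨mv, hmv⟩ = r := ⟨t0.1, t0.isLt, hl⟩
        obtain ⟨h1, h2⟩ := Nat.find_spec hPex
        exact ⟨Nat.find hPex, h1, h2, fun s hs hsr => Nat.find_min hPex hs ⟨s.isLt, hsr⟩⟩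
      have htm0 : tmv ≤ t0.1 := by
        by_contra hc
        push_neg at hc
        exact hminl t0 hc hl
      have ht1n := t1.isLt
      have good : ∀ s : ℕ, tmv < s → s ≤ t1.1 → ∀ X, R.lab s X = some r → ∀ v, v ∈ X →
          ∀ f, f ∈ T.G.edgeSet → v ∈ f → R.lab s f = none →
          ∃ e u, e ∈ T.G.edgeSet ∧ v ∈ e ∧ R.lab s e = some u ∧ r < u := by
        intro s
        induction s with
        | zero => intro h; exact absurd h (Nat.not_lt_zero _)
        | succ m' ihm =>
          intro hs1 hs2 X hX v hv f hfe hvf hfn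
          have hmn : m' < n := by omega
          have hnw : R.winner ⟨m', hmn⟩ ≠ r := hnowin ⟨m', hmn⟩ (show m' < t1.1 by omega)
          by_cases hXn : X = R.newE ⟨m', hmn⟩
          · subst hXn
            exact R.newE_good hT ⟨m', hmn⟩ r hnw hX v hv f hfe hvf hfn
          · rcases Nat.lt_or_ge tmv m' with hc | hc
            · exact R.frame_good ⟨m', hmn⟩ r (ihm hc (by omega)) X hXn hX v hv f hfe hvf hfn
            · obtain rfl : m' = tmv := by omega
              exact R.base_good hT ⟨m', hmn⟩ r hltm hminl
                (fun s (hs : s.1 < m') => hnowin s (by omega)) X hXn hX v hv f hfe hvf hfn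
      have hWlab : R.lab t1.1 (R.winnerE t1) = some r := by
        have hh := R.lab_winnerE t1
        rw [hw] at hh
        exact hh
      obtain ⟨e, u, hem, hve, heu, hru⟩ :=
        good t1.1 (by omega) le_rfl (R.winnerE t1) hWlab (R.vtx t1) (R.vtx_mem t1).2.1
          (R.newE t1) (R.newE_mem t1) (R.vtx_mem t1).2.2 (R.newE_unlabeled t1)
      rcases R.edges_at_vtx hT t1 e hem hve with rfl | rfl | rfl
      · rw [R.lab_loserE t1] at heu
        have h2 : u = R.loser t1 := (Option.some.inj heu).symm
        have h3 : R.loser t1 < r := by rw [← hw]; exact R.lt_lw t1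
        rw [h2] at hru
        exact absurd (lt_trans hru h3) (lt_irrefl r)
      · rw [R.lab_winnerE t1] at heu
        have h2 : u = R.winner t1 := (Option.some.inj heu).symm
        rw [h2, hw] at hru
        exact absurd hru (lt_irrefl r)
      · rw [R.newE_unlabeled t1] at heu
        exact nomatch heu

end LazyFinal
/-- In the lazy tournament of `T ∈ Tour(k)`, winners never lose: a label
that wins some round loses no round; each label is either the winner of every round it plays
or the loser of every round it plays. -/
theorem winners_losers_disjoint (n : ℕ) (k : Fin n → ℕ) (hk : ∑ m, k m = n)
    (T : PreTree (n+3) (2*n+4)) (hT : T.IsTrivalent) (hab : T.ABAdj)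
    (R : Run n T) (hR : ∀ m : Fin n, R.wins (lbl m) = k m) :
    (∀ r : Fin (n+3), (∃ t : Fin n, R.winner t = r) → ∀ t : Fin n, R.loser t ≠ r) ∧
    (∀ x : Fin (n+3),
      (∀ t : Fin n, (R.loser t = x ∨ R.winner t = x) → R.winner t = x) ∨
      (∀ t : Fin n, (R.loser t = x ∨ R.winner t = x) → R.loser t = x)) := by
  have part1 : ∀ r : Fin (n+3), (∃ t : Fin n, R.winner t = r) → ∀ t : Fin n, R.loser t ≠ r := by
    rintro r ⟨t, hw⟩ t' hl
    exact R.key hT t.1 t rfl r hw t' hl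
  refine ⟨part1, ?_⟩
  intro x
  by_cases hx : ∃ t : Fin n, R.winner t = x
  · left
    intro t ht
    rcases ht with hlo | hwi
    · exact absurd hlo (part1 x hx t)
    · exact hwi
  · right
    intro t ht
    rcases ht with hlo | hwi
    · exact hlo
    · exact absurd ⟨t, hwi⟩ hx
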